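/- arXiv:2102.10373 — 2 statements merged into one kernel-verified Lean document; each statement's English description precedes it below -/
import Mathlib

section
/- Let Ξ = {X ∈ 𝕊^n : diag(X) = e} where e is the all-ones vector, and let X̄ ∈ 𝕊_+^n with diag(X̄) = e and rank(X̄) ≤ r. If H = Diag(y) for some y ∈ ℝⁿ (i.e. H lies in the range of the adjoint of the diagonal map) and H = H¹ + H² with H¹ ∈ N_{𝕊_+^n}(X̄) and H² ∈ N_{Λ_r}(X̄), then y = 0 and H = 0. -/
attribute [local instance] Matrix.frobeniusNormedAddCommGroup



/-- The trace (Frobenius) inner product of two real square matrices. -/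
def minner {n : ℕ} (A B : Matrix (Fin n) (Fin n) ℝ) : ℝ :=
  ∑ i, ∑ j, A i j * B i j

/-- The Fréchet (regular) normal cone to `S` at `x`. -/
def frechetNormalCone {n : ℕ} (S : Set (Matrix (Fin n) (Fin n) ℝ))
    (x : Matrix (Fin n) (Fin n) ℝ) : Set (Matrix (Fin n) (Fin n) ℝ) :=
  {v | ∀ ε > (0:ℝ), ∃ δ > (0:ℝ), ∀ y ∈ S, dist y x < δ →
    minner v (y - x) ≤ ε * dist y x}

/-- The limiting (Mordukhovich) normal cone to `S` at `x`. -/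
def limitingNormalCone {n : ℕ} (S : Set (Matrix (Fin n) (Fin n) ℝ))
    (x : Matrix (Fin n) (Fin n) ℝ) : Set (Matrix (Fin n) (Fin n) ℝ) :=
  {v | ∃ xs vs : ℕ → Matrix (Fin n) (Fin n) ℝ,
    (∀ k, xs k ∈ S) ∧ Filter.Tendsto xs Filter.atTop (nhds x) ∧
    Filter.Tendsto vs Filter.atTop (nhds v) ∧
    ∀ k, vs k ∈ frechetNormalCone S (xs k)}

open Matrix

attribute [local instance] Matrix.frobeniusNormedSpace

section Aux

variable {n : ℕ}

lemma abs_entry_le_norm (A : Matrix (Fin n) (Fin n) ℝ) (i j : Fin n) :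
    |A i j| ≤ ‖A‖ := by
  rw [Matrix.frobenius_norm_def, ← Real.sqrt_eq_rpow]
  rw [Real.le_sqrt (abs_nonneg _) (by positivity)]
  have h2 : ∀ a : ℝ, ‖a‖ ^ (2:ℝ) = a ^ 2 := by
    intro a
    rw [Real.rpow_two, Real.norm_eq_abs, sq_abs]
  calc |A i j| ^ 2 = (A i j) ^ 2 := sq_abs _
    _ ≤ ∑ j', (A i j') ^ 2 := by
        apply Finset.single_le_sum (f := fun j' => (A i j') ^ 2)
        · intro k _; positivity
        · exact Finset.mem_univ j
    _ ≤ ∑ i', ∑ j', (A i' j') ^ 2 := by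
        apply Finset.single_le_sum (f := fun i' => ∑ j', (A i' j') ^ 2)
        · intro k _; apply Finset.sum_nonneg; intro l _; positivity
        · exact Finset.mem_univ i
    _ = ∑ i', ∑ j', ‖A i' j'‖ ^ (2:ℝ) := by simp_rw [h2]

lemma entry_tendsto {xs : ℕ → Matrix (Fin n) (Fin n) ℝ} {x : Matrix (Fin n) (Fin n) ℝ}
    (h : Filter.Tendsto xs Filter.atTop (nhds x)) (i j : Fin n) :
    Filter.Tendsto (fun k => xs k i j) Filter.atTop (nhds (x i j)) := by
  exact ((continuous_apply j).comp (continuous_apply i)).continuousAt.tendsto.comp h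

lemma minner_add_right (v A B : Matrix (Fin n) (Fin n) ℝ) :
    minner v (A + B) = minner v A + minner v B := by
  simp [minner, Matrix.add_apply, mul_add, Finset.sum_add_distrib]

lemma minner_smul_right (v A : Matrix (Fin n) (Fin n) ℝ) (t : ℝ) :
    minner v (t • A) = t * minner v A := by
  simp [minner, Matrix.smul_apply, Finset.mul_sum]
  ring_nf
  apply Finset.sum_congr rfl; intro i _
  apply Finset.sum_congr rfl; intro j _
  ring

/-- Key: if `S` is closed under congruence `Z ↦ A Z Aᵀ`, then any Fréchet normal `v`
at a point `x ∈ S` satisfies `⟪v, Bx + xBᵀ⟫ ≤ 0` for every `B`. -/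
lemma frechet_congruence_le (S : Set (Matrix (Fin n) (Fin n) ℝ))
    (hS : ∀ A : Matrix (Fin n) (Fin n) ℝ, ∀ Z ∈ S, A * Z * Aᵀ ∈ S)
    (x v : Matrix (Fin n) (Fin n) ℝ) (hx : x ∈ S) (hv : v ∈ frechetNormalCone S x)
    (B : Matrix (Fin n) (Fin n) ℝ) :
    minner v (B * x + x * Bᵀ) ≤ 0 := by
  set D : Matrix (Fin n) (Fin n) ℝ := B * x + x * Bᵀ with hD
  set E : Matrix (Fin n) (Fin n) ℝ := B * x * Bᵀ with hE
  by_contra hpos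
  push_neg at hpos
  -- choose ε
  have hεpos : (0:ℝ) < minner v D / (‖D‖ + 1) := by
    apply div_pos hpos
    positivity
  obtain ⟨δ, hδpos, hδ⟩ := hv _ hεpos
  set ε := minner v D / (‖D‖ + 1) with hεdef
  -- choose t > 0 small
  obtain ⟨t, ht0, htδ, hts⟩ :
      ∃ t : ℝ, 0 < t ∧ t * (‖D‖ + ‖E‖) < δ ∧ t * (ε * ‖E‖ + |minner v E|) < ε ∧ t ≤ 1 := by
    obtain ⟨t, ht0, ht1⟩ := exists_between
      (lt_min (lt_min hδpos (by positivity : (0:ℝ) < ε / (ε * ‖E‖ + |minner v E| + 1)))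
        one_pos)
    refine ⟨t / (‖D‖ + ‖E‖ + 1), by positivity, ?_, ?_, ?_⟩
    · have h1 : t / (‖D‖ + ‖E‖ + 1) * (‖D‖ + ‖E‖) ≤ t := by
        rw [div_mul_eq_mul_div, div_le_iff₀ (by positivity)]
        nlinarith [abs_nonneg t, norm_nonneg D, norm_nonneg E]
      calc t / (‖D‖ + ‖E‖ + 1) * (‖D‖ + ‖E‖) ≤ t := h1
        _ < δ := lt_of_lt_of_le ht1 (le_trans (min_le_left _ _) (min_le_left _ _))
    · have h2 : t / (‖D‖ + ‖E‖ + 1) ≤ t := by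
        apply div_le_self (le_of_lt ht0)
        nlinarith [norm_nonneg D, norm_nonneg E]
      have h3 : t < ε / (ε * ‖E‖ + |minner v E| + 1) :=
        lt_of_lt_of_le ht1 (le_trans (min_le_left _ _) (min_le_right _ _))
      have h4 : t * (ε * ‖E‖ + |minner v E|) < ε := by
        have hpos' : (0:ℝ) < ε * ‖E‖ + |minner v E| + 1 := by positivity
        have htP : t * (ε * ‖E‖ + |minner v E| + 1) < ε := (lt_div_iff₀ hpos').mp h3
        nlinarith
      calc t / (‖D‖ + ‖E‖ + 1) * (ε * ‖E‖ + |minner v E|)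
          ≤ t * (ε * ‖E‖ + |minner v E|) := by
            apply mul_le_mul_of_nonneg_right h2
            positivity
        _ < ε := h4
    · have h2 : t / (‖D‖ + ‖E‖ + 1) ≤ t := by
        apply div_le_self (le_of_lt ht0)
        nlinarith [norm_nonneg D, norm_nonneg E]
      exact le_trans h2 (le_of_lt (lt_of_lt_of_le ht1 (min_le_right _ _)))
  obtain ⟨htε, ht1⟩ := hts
  -- the perturbed point
  set Z : Matrix (Fin n) (Fin n) ℝ := (1 + t • B) * x * (1 + t • B)ᵀ with hZ
  have hZS : Z ∈ S := hS _ _ hx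
  have hZx : Z - x = t • D + (t^2) • E := by
    rw [hZ, hD, hE]
    simp [Matrix.transpose_add, Matrix.transpose_smul, add_mul, mul_add, smul_smul]
    ring_nf
    noncomm_ring
  have hdist : dist Z x ≤ t * (‖D‖ + t * ‖E‖) := by
    rw [dist_eq_norm, hZx]
    calc ‖t • D + (t^2) • E‖ ≤ ‖t • D‖ + ‖(t^2) • E‖ := norm_add_le _ _
      _ = |t| * ‖D‖ + |t^2| * ‖E‖ := by rw [norm_smul, norm_smul, Real.norm_eq_abs, Real.norm_eq_abs]
      _ = t * (‖D‖ + t * ‖E‖) := by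
          rw [abs_of_pos ht0, abs_of_pos (by positivity : (0:ℝ) < t^2)]
          ring
  have hdistδ : dist Z x < δ := by
    apply lt_of_le_of_lt hdist
    apply lt_of_le_of_lt _ htδ
    have : t * ‖E‖ ≤ ‖E‖ := by
      nlinarith [norm_nonneg E]
    nlinarith [norm_nonneg D, norm_nonneg E]
  have hkey := hδ Z hZS hdistδ
  rw [hZx, minner_add_right, minner_smul_right, minner_smul_right] at hkey
  have hdistnn : ε * dist Z x ≤ ε * (t * (‖D‖ + t * ‖E‖)) :=
    mul_le_mul_of_nonneg_left hdist (le_of_lt hεpos)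
  have h5 : t * minner v D + t^2 * minner v E ≤ ε * (t * (‖D‖ + t * ‖E‖)) :=
    le_trans hkey hdistnn
  -- divide by t
  have h6 : minner v D + t * minner v E ≤ ε * (‖D‖ + t * ‖E‖) := by
    have := (div_le_div_iff_of_pos_right ht0).mpr h5
    nlinarith [h5, ht0]
  have h7 : minner v D ≤ ε * ‖D‖ + t * (ε * ‖E‖ + |minner v E|) := by
    nlinarith [le_abs_self (minner v E), neg_abs_le (minner v E), mul_le_mul_of_nonneg_left (neg_abs_le (minner v E)) (le_of_lt ht0)]
  have h8 : minner v D < ε * ‖D‖ + ε := by linarith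
  -- but ε * (‖D‖ + 1) = minner v D
  have h9 : ε * (‖D‖ + 1) = minner v D := by
    rw [hεdef]
    field_simp
  nlinarith [h8, h9]

lemma frechet_congruence_eq (S : Set (Matrix (Fin n) (Fin n) ℝ))
    (hS : ∀ A : Matrix (Fin n) (Fin n) ℝ, ∀ Z ∈ S, A * Z * Aᵀ ∈ S)
    (x v : Matrix (Fin n) (Fin n) ℝ) (hx : x ∈ S) (hv : v ∈ frechetNormalCone S x)
    (B : Matrix (Fin n) (Fin n) ℝ) :
    minner v (B * x + x * Bᵀ) = 0 := by
  have h1 := frechet_congruence_le S hS x v hx hv B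
  have h2 := frechet_congruence_le S hS x v hx hv (-B)
  have : minner v ((-B) * x + x * (-B)ᵀ) = - minner v (B * x + x * Bᵀ) := by
    have : (-B) * x + x * (-B)ᵀ = (-1 : ℝ) • (B * x + x * Bᵀ) := by
      simp [Matrix.transpose_neg, neg_mul, mul_neg]
    rw [this, minner_smul_right]; ring
  rw [this] at h2
  linarith

lemma limiting_congruence_eq (S : Set (Matrix (Fin n) (Fin n) ℝ))
    (hS : ∀ A : Matrix (Fin n) (Fin n) ℝ, ∀ Z ∈ S, A * Z * Aᵀ ∈ S)
    (x v : Matrix (Fin n) (Fin n) ℝ) (hv : v ∈ limitingNormalCone S x)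
    (B : Matrix (Fin n) (Fin n) ℝ) :
    minner v (B * x + x * Bᵀ) = 0 := by
  obtain ⟨xs, vs, hxsS, hxs, hvs, hfr⟩ := hv
  have hk : ∀ k, minner (vs k) (B * xs k + xs k * Bᵀ) = 0 := fun k =>
    frechet_congruence_eq S hS (xs k) (vs k) (hxsS k) (hfr k) B
  -- the function k ↦ minner (vs k) (B * xs k + xs k * Bᵀ) tends to the goal value
  have htend : Filter.Tendsto (fun k => minner (vs k) (B * xs k + xs k * Bᵀ))
      Filter.atTop (nhds (minner v (B * x + x * Bᵀ))) := by
    unfold minner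
    apply tendsto_finset_sum
    intro i _
    apply tendsto_finset_sum
    intro j _
    apply Filter.Tendsto.mul (entry_tendsto hvs i j)
    simp only [Matrix.add_apply, Matrix.mul_apply, Matrix.transpose_apply]
    apply Filter.Tendsto.add
    · apply tendsto_finset_sum
      intro l _
      exact (tendsto_const_nhds).mul (entry_tendsto hxs l j)
    · apply tendsto_finset_sum
      intro l _
      exact (entry_tendsto hxs i l).mul tendsto_const_nhds
  have : Filter.Tendsto (fun _ : ℕ => (0:ℝ)) Filter.atTop
      (nhds (minner v (B * x + x * Bᵀ))) := by
    convert htend using 1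
    funext k; exact (hk k).symm
  exact tendsto_nhds_unique this tendsto_const_nhds

end Aux

/-- let `X̄` be PSD with unit diagonal and `rank X̄ ≤ r`. If
`H = Diag(y)` and `H = H¹ + H²` with `H¹ ∈ N_{𝕊₊ⁿ}(X̄)` and `H² ∈ N_{Λ_r}(X̄)`,
then `y = 0` and `H = 0`. -/
theorem stmt11 (n r : ℕ) (Xbar : Matrix (Fin n) (Fin n) ℝ) (hX : Xbar.PosSemidef)
    (hdiag : ∀ i, Xbar i i = 1) (hrank : Xbar.rank ≤ r)
    (y : Fin n → ℝ) (H1 H2 : Matrix (Fin n) (Fin n) ℝ)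
    (hH1 : H1 ∈ limitingNormalCone {Z : Matrix (Fin n) (Fin n) ℝ | Z.PosSemidef} Xbar)
    (hH2 : H2 ∈ limitingNormalCone
      {Z : Matrix (Fin n) (Fin n) ℝ | Z.IsHermitian ∧ Z.rank ≤ r} Xbar)
    (hsum : Matrix.diagonal y = H1 + H2) :
    y = 0 ∧ Matrix.diagonal y = 0 := by
  -- both sets are closed under congruence
  have hS1 : ∀ A : Matrix (Fin n) (Fin n) ℝ,
      ∀ Z ∈ {Z : Matrix (Fin n) (Fin n) ℝ | Z.PosSemidef},
      A * Z * Aᵀ ∈ {Z : Matrix (Fin n) (Fin n) ℝ | Z.PosSemidef} := by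
    intro A Z hZ
    exact hZ.mul_mul_conjTranspose_same A
  have hS2 : ∀ A : Matrix (Fin n) (Fin n) ℝ,
      ∀ Z ∈ {Z : Matrix (Fin n) (Fin n) ℝ | Z.IsHermitian ∧ Z.rank ≤ r},
      A * Z * Aᵀ ∈ {Z : Matrix (Fin n) (Fin n) ℝ | Z.IsHermitian ∧ Z.rank ≤ r} := by
    intro A Z hZ
    refine ⟨?_, ?_⟩
    · have hA : Aᵀ = Aᴴ := by
        ext a b
        simp [Matrix.conjTranspose_apply]
      rw [hA]
      exact Matrix.isHermitian_mul_mul_conjTranspose A hZ.1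
    · calc (A * Z * Aᵀ).rank ≤ (A * Z).rank := Matrix.rank_mul_le_left _ _
        _ ≤ Z.rank := Matrix.rank_mul_le_right _ _
        _ ≤ r := hZ.2
  have key : ∀ B : Matrix (Fin n) (Fin n) ℝ,
      minner (Matrix.diagonal y) (B * Xbar + Xbar * Bᵀ) = 0 := by
    intro B
    have h1 := limiting_congruence_eq _ hS1 Xbar H1 hH1 B
    have h2 := limiting_congruence_eq _ hS2 Xbar H2 hH2 B
    have : minner (Matrix.diagonal y) (B * Xbar + Xbar * Bᵀ)
        = minner H1 (B * Xbar + Xbar * Bᵀ) + minner H2 (B * Xbar + Xbar * Bᵀ) := by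
      rw [hsum]
      simp [minner, Matrix.add_apply, add_mul, Finset.sum_add_distrib]
    rw [this, h1, h2]; ring
  have hy : y = 0 := by
    funext i
    have hk := key (Matrix.single i i 1)
    have hmin : ∀ W : Matrix (Fin n) (Fin n) ℝ,
        minner (Matrix.diagonal y) W = ∑ j, y j * W j j := by
      intro W
      unfold minner
      apply Finset.sum_congr rfl
      intro a _
      rw [Finset.sum_eq_single a
        (fun b _ hba => by simp [Matrix.diagonal_apply_ne' y hba])
        (fun hb => absurd (Finset.mem_univ a) hb)]
      simp [Matrix.diagonal_apply_eq]
    rw [hmin] at hk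
    have hW : ∀ j, ((Matrix.single i i 1 * Xbar
        + Xbar * (Matrix.single i i 1)ᵀ : Matrix (Fin n) (Fin n) ℝ)) j j
        = if j = i then 2 else 0 := by
      intro j
      simp only [Matrix.add_apply, Matrix.mul_apply, Matrix.transpose_apply,
        Matrix.single, Matrix.of_apply, ite_mul, mul_ite, one_mul, mul_one,
        zero_mul, mul_zero]
      by_cases hji : j = i
      · subst hji
        simp [hdiag j]
        norm_num
      · have hij : ¬ i = j := fun h => hji h.symm
        simp [hij, hji]
    rw [Finset.sum_congr rfl (fun j _ => by rw [hW j])] at hk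
    have hsum2 : (∑ j, y j * (if j = i then 2 else 0)) = y i * 2 := by
      simp [mul_ite, mul_zero]
    rw [hsum2] at hk
    show y i = 0
    linarith
  exact ⟨hy, by rw [hy]; exact Matrix.diagonal_zero⟩
end

section
/- Let Ω = {X ∈ ℝ^{n×n} : X ≥ 0 entrywise, Xe = e} (the row-stochastic matrices) and let X̄ ∈ Ω with rank(X̄) ≤ r. Suppose H = y·eᵀ − H¹ where y ∈ ℝⁿ, H¹ ∈ N_{ℝ_+^{n×n}}(X̄) (so H¹ ≤ 0 entrywise and ⟨H¹, X̄⟩ = 0), and H ∈ N_{Λ_r}(X̄) so that ⟨H, X̄⟩ = 0 and H·X̄ᵀ = 0. Then H = 0. -/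
attribute [local instance] Matrix.frobeniusNormedAddCommGroup

attribute [local instance] Matrix.frobeniusNormedSpace

lemma minner_smul {n : ℕ} (A B : Matrix (Fin n) (Fin n) ℝ) (t : ℝ) :
    minner A (t • B) = t * minner A B := by
  simp only [minner, Finset.mul_sum, Matrix.smul_apply, smul_eq_mul]
  congr 1; ext i; congr 1; ext j; ring

lemma minner_neg {n : ℕ} (A B : Matrix (Fin n) (Fin n) ℝ) :
    minner A (-B) = - minner A B := by
  simp [minner, ← Finset.sum_neg_distrib]

/-- If rays `x + t • D` (for `t > 0`) stay in `S`, a Fréchet normal pairs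
nonpositively with `D`. -/
lemma frechet_pair_nonpos {n : ℕ} {S : Set (Matrix (Fin n) (Fin n) ℝ)}
    {x v D : Matrix (Fin n) (Fin n) ℝ}
    (hv : v ∈ frechetNormalCone S x) (hD : ∀ t : ℝ, 0 < t → x + t • D ∈ S) :
    minner v D ≤ 0 := by
  rcases eq_or_ne D 0 with rfl | hD0
  · simp [minner]
  have hDn : (0:ℝ) < ‖D‖ := norm_pos_iff.mpr hD0
  refine le_of_forall_pos_le_add ?_
  intro ε hε
  obtain ⟨δ, hδ, h⟩ := hv (ε / ‖D‖) (by positivity)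
  set t : ℝ := δ / (2 * ‖D‖) with ht
  have htpos : 0 < t := by positivity
  have hdist : dist (x + t • D) x = t * ‖D‖ := by
    rw [dist_eq_norm]
    simp [norm_smul, abs_of_pos htpos]
  have htD : t * ‖D‖ = δ / 2 := by
    rw [ht]; field_simp
  have hlt : dist (x + t • D) x < δ := by rw [hdist, htD]; linarith
  have key := h _ (hD t htpos) hlt
  rw [hdist, htD] at key
  simp only [add_sub_cancel_left, minner_smul] at key
  have h2 : t * minner v D ≤ t * (ε / ‖D‖ * ‖D‖) := by
    calc t * minner v D ≤ ε / ‖D‖ * (δ/2) := key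
    _ = t * (ε / ‖D‖ * ‖D‖) := by rw [← htD]; ring
  have h3 := (mul_le_mul_iff_right₀ htpos).mp h2
  rw [div_mul_cancel₀ _ (ne_of_gt hDn)] at h3
  linarith

/-- If the whole line `x + t • D` stays in `S`, a Fréchet normal is orthogonal
to `D`. -/
lemma frechet_pair_zero {n : ℕ} {S : Set (Matrix (Fin n) (Fin n) ℝ)}
    {x v D : Matrix (Fin n) (Fin n) ℝ}
    (hv : v ∈ frechetNormalCone S x) (hD : ∀ t : ℝ, x + t • D ∈ S) :
    minner v D = 0 := by
  have h1 := frechet_pair_nonpos hv (fun t _ => hD t)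
  have h2 := frechet_pair_nonpos hv (fun t (ht : 0 < t) => by
    have := hD (-t); rwa [neg_smul, ← smul_neg] at this)
  rw [minner_neg] at h2
  linarith

lemma minner_mul_left_continuous {n : ℕ} (E : Matrix (Fin n) (Fin n) ℝ) :
    Continuous fun p : Matrix (Fin n) (Fin n) ℝ × Matrix (Fin n) (Fin n) ℝ =>
      minner p.1 (E * p.2) := by
  have heq : (fun p : Matrix (Fin n) (Fin n) ℝ × Matrix (Fin n) (Fin n) ℝ =>
      minner p.1 (E * p.2)) =
      fun p => ∑ i, ∑ j, p.1 i j * ∑ c, E i c * p.2 c j := by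
    funext p; simp [minner, Matrix.mul_apply]
  rw [heq]
  refine continuous_finset_sum _ fun i _ => continuous_finset_sum _ fun j _ => ?_
  refine Continuous.mul ((continuous_apply j).comp ((continuous_apply i).comp continuous_fst)) ?_
  exact continuous_finset_sum _ fun c _ => continuous_const.mul
    ((continuous_apply j).comp ((continuous_apply c).comp continuous_snd))

lemma minner_mul_right_continuous {n : ℕ} (E : Matrix (Fin n) (Fin n) ℝ) :
    Continuous fun p : Matrix (Fin n) (Fin n) ℝ × Matrix (Fin n) (Fin n) ℝ =>
      minner p.1 (p.2 * E) := by
  have heq : (fun p : Matrix (Fin n) (Fin n) ℝ × Matrix (Fin n) (Fin n) ℝ =>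
      minner p.1 (p.2 * E)) =
      fun p => ∑ i, ∑ j, p.1 i j * ∑ c, p.2 i c * E c j := by
    funext p; simp [minner, Matrix.mul_apply]
  rw [heq]
  refine continuous_finset_sum _ fun i _ => continuous_finset_sum _ fun j _ => ?_
  refine Continuous.mul ((continuous_apply j).comp ((continuous_apply i).comp continuous_fst)) ?_
  exact continuous_finset_sum _ fun c _ =>
    (by fun_prop)

/-- A limiting normal to the rank-`≤ r` variety is orthogonal to `E * x`. -/
lemma limiting_left {n r : ℕ} {x v : Matrix (Fin n) (Fin n) ℝ}
    (hv : v ∈ limitingNormalCone {Z : Matrix (Fin n) (Fin n) ℝ | Z.rank ≤ r} x)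
    (E : Matrix (Fin n) (Fin n) ℝ) :
    minner v (E * x) = 0 := by
  obtain ⟨xs, vs, hxsS, hxs, hvs, hfre⟩ := hv
  have key : ∀ k, minner (vs k) (E * xs k) = 0 := by
    intro k
    refine frechet_pair_zero (hfre k) fun t => ?_
    have heq : xs k + t • (E * xs k) = (1 + t • E) * xs k := by
      rw [Matrix.add_mul, Matrix.one_mul, Matrix.smul_mul]
    rw [Set.mem_setOf_eq, heq]
    exact le_trans (Matrix.rank_mul_le_right _ _) (hxsS k)
  have hpair : Filter.Tendsto (fun k => (vs k, xs k)) Filter.atTop (nhds (v, x)) :=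
    hvs.prodMk_nhds hxs
  have hT := ((minner_mul_left_continuous (n:=n) E).tendsto (v, x)).comp hpair
  have hT0 : Filter.Tendsto (fun _ : ℕ => (0:ℝ)) Filter.atTop
      (nhds (minner v (E * x))) := hT.congr key
  exact tendsto_nhds_unique hT0 tendsto_const_nhds

/-- A limiting normal to the rank-`≤ r` variety is orthogonal to `x * E`. -/
lemma limiting_right {n r : ℕ} {x v : Matrix (Fin n) (Fin n) ℝ}
    (hv : v ∈ limitingNormalCone {Z : Matrix (Fin n) (Fin n) ℝ | Z.rank ≤ r} x)
    (E : Matrix (Fin n) (Fin n) ℝ) :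
    minner v (x * E) = 0 := by
  obtain ⟨xs, vs, hxsS, hxs, hvs, hfre⟩ := hv
  have key : ∀ k, minner (vs k) (xs k * E) = 0 := by
    intro k
    refine frechet_pair_zero (hfre k) fun t => ?_
    have heq : xs k + t • (xs k * E) = xs k * (1 + t • E) := by
      rw [Matrix.mul_add, Matrix.mul_one, Matrix.mul_smul]
    rw [Set.mem_setOf_eq, heq]
    exact le_trans (Matrix.rank_mul_le_left _ _) (hxsS k)
  have hpair : Filter.Tendsto (fun k => (vs k, xs k)) Filter.atTop (nhds (v, x)) :=
    hvs.prodMk_nhds hxs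
  have hT := ((minner_mul_right_continuous (n:=n) E).tendsto (v, x)).comp hpair
  have hT0 : Filter.Tendsto (fun _ : ℕ => (0:ℝ)) Filter.atTop
      (nhds (minner v (x * E))) := hT.congr key
  exact tendsto_nhds_unique hT0 tendsto_const_nhds

lemma minner_std_left {n : ℕ} (v x : Matrix (Fin n) (Fin n) ℝ) (i j : Fin n) :
    minner v (Matrix.single i j 1 * x) = ∑ b, v i b * x j b := by
  unfold minner
  rw [Finset.sum_eq_single i]
  · congr 1; ext b
    rw [Matrix.single_mul_apply_same]
    ring
  · intro a _ ha
    apply Finset.sum_eq_zero; intro b _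
    rw [Matrix.single_mul_apply_of_ne 1 i j a b ha x]; ring
  · intro h; exact absurd (Finset.mem_univ i) h

lemma minner_std_right {n : ℕ} (v x : Matrix (Fin n) (Fin n) ℝ) (i j : Fin n) :
    minner v (x * Matrix.single i j 1) = ∑ a, v a j * x a i := by
  unfold minner
  rw [Finset.sum_comm]
  rw [Finset.sum_eq_single j]
  · congr 1; ext a
    rw [Matrix.mul_single_apply_same]
    ring
  · intro b _ hb
    apply Finset.sum_eq_zero; intro a _
    rw [Matrix.mul_single_apply_of_ne 1 i j a b hb x]; ring
  · intro h; exact absurd (Finset.mem_univ j) h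

/-- let `X̄` be a row-stochastic matrix (entrywise nonnegative with
`X̄ e = e`) of rank at most `r`. Suppose `H = y·eᵀ − H¹`, where `H¹` belongs to the
normal cone of the nonnegative orthant at `X̄` (`H¹ ≤ 0` entrywise and `H¹ᵢⱼ = 0`
whenever `X̄ᵢⱼ > 0`), and `H ∈ N_{Λ_r}(X̄)`. Then `H = 0`. -/
theorem stmt12 (n r : ℕ) (Xbar : Matrix (Fin n) (Fin n) ℝ)
    (hpos : ∀ i j, 0 ≤ Xbar i j)
    (hrowsum : Xbar.mulVec (fun _ => (1:ℝ)) = fun _ => (1:ℝ))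
    (hrank : Xbar.rank ≤ r)
    (y : Fin n → ℝ) (H1 : Matrix (Fin n) (Fin n) ℝ)
    (hH1neg : ∀ i j, H1 i j ≤ 0)
    (hH1comp : ∀ i j, 0 < Xbar i j → H1 i j = 0)
    (hH : (Matrix.of fun i _ => y i) - H1 ∈
      limitingNormalCone {Z : Matrix (Fin n) (Fin n) ℝ | Z.rank ≤ r} Xbar) :
    (Matrix.of fun i _ => y i) - H1 = 0 := by
  set v : Matrix (Fin n) (Fin n) ℝ := (Matrix.of fun i _ => y i) - H1 with hv
  have hventry : ∀ i b, v i b = y i - H1 i b := by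
    intro i b; simp [hv, Matrix.sub_apply]
  -- row sums of Xbar are 1
  have hsum : ∀ i, ∑ b, Xbar i b = 1 := by
    intro i
    have := congrFun hrowsum i
    simpa [Matrix.mulVec, dotProduct] using this
  -- complementarity
  have hcomp : ∀ i b, H1 i b * Xbar i b = 0 := by
    intro i b
    rcases lt_or_eq_of_le (hpos i b) with h | h
    · rw [hH1comp i b h]; ring
    · rw [← h]; ring
  -- Fact 1: rows
  have F1 : ∀ i j, ∑ b, v i b * Xbar j b = 0 := by
    intro i j
    have := limiting_left hH (Matrix.single i j 1)
    rwa [minner_std_left] at this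
  -- Fact 2: columns
  have F2 : ∀ i j, ∑ a, v a j * Xbar a i = 0 := by
    intro i j
    have := limiting_right hH (Matrix.single i j 1)
    rwa [minner_std_right] at this
  -- y = 0
  have hy : ∀ i, y i = 0 := by
    intro i
    have h := F1 i i
    have hexp : ∑ b, v i b * Xbar i b
        = y i * (∑ b, Xbar i b) - ∑ b, H1 i b * Xbar i b := by
      rw [Finset.mul_sum, ← Finset.sum_sub_distrib]
      congr 1; ext b; rw [hventry]; ring
    rw [hexp, hsum i] at h
    have : ∑ b, H1 i b * Xbar i b = 0 := Finset.sum_eq_zero fun b _ => hcomp i b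
    rw [this] at h
    linarith
  -- each product H1 a j * Xbar a i = 0
  have hprod : ∀ a i j, H1 a j * Xbar a i = 0 := by
    intro a i j
    have h := F2 i j
    have hexp : ∑ a, v a j * Xbar a i = ∑ a, -(H1 a j * Xbar a i) := by
      congr 1; ext a; rw [hventry, hy]; ring
    rw [hexp] at h
    have hz := (Finset.sum_eq_zero_iff_of_nonneg
      (fun a _ => by nlinarith [hH1neg a j, hpos a i])).mp h a (Finset.mem_univ a)
    linarith
  -- H1 = 0
  have hH1 : ∀ a j, H1 a j = 0 := by
    intro a j
    obtain ⟨i, hi⟩ : ∃ i, Xbar a i ≠ 0 := by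
      by_contra hc
      push_neg at hc
      have : ∑ b, Xbar a b = 0 := Finset.sum_eq_zero fun b _ => hc b
      rw [hsum a] at this
      exact one_ne_zero this
    have := hprod a i j
    exact (mul_eq_zero.mp this).resolve_right hi
  -- conclude
  rw [hv]
  ext i j
  simp [Matrix.sub_apply, hy, hH1]
end
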